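/- Let m and n be nonnegative integers and let G = (ℤ₃)^m × (ℤ₂)^n, i.e., the direct product of m copies of the cyclic group of order 3 and n copies of the cyclic group of order 2. Then G has no nontrivial near-factorization. -/

import Mathlib

open Finset
open scoped Pointwise

/-- A pair `(A, B)` of subsets of a finite additive group `G` is a near-factorization of `G`
if `|A| * |B| = |G| - 1` and `A + B = G \ {0}`.  It is nontrivial if `|A| > 1` and `|B| > 1`. -/
def IsNontrivialAddNearFactorization {G : Type*} [AddGroup G] [Fintype G] [DecidableEq G]
    (A B : Finset G) : Prop :=
  A.card * B.card = Fintype.card G - 1 ∧ A + B = Finset.univ \ {0} ∧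
    1 < A.card ∧ 1 < B.card

namespace NFaux

noncomputable def om : ℂ := Complex.exp (2 * Real.pi * Complex.I / 3)

lemma hprim : IsPrimitiveRoot om 3 := Complex.isPrimitiveRoot_exp 3 (by norm_num)

lemma hom3 : om ^ 3 = 1 := hprim.pow_eq_one

lemma hrel : om ^ 2 + om + 1 = 0 := by
  have h := hprim.geom_sum_eq_zero (by norm_num)
  rw [Finset.sum_range_succ, Finset.sum_range_succ, Finset.sum_range_succ,
    Finset.sum_range_zero] at h
  linear_combination h

lemma pow_mod {ζ : ℂ} {k : ℕ} (h : ζ ^ k = 1) (a : ℕ) : ζ ^ a = ζ ^ (a % k) := by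
  conv_lhs => rw [← Nat.div_add_mod a k]
  rw [pow_add, pow_mul, h, one_pow, one_mul]

noncomputable def ψ3 (x : ZMod 3) : ℂ := om ^ x.val
noncomputable def ψ2 (x : ZMod 2) : ℂ := (-1 : ℂ) ^ x.val

lemma ψ3_add (x y : ZMod 3) : ψ3 (x + y) = ψ3 x * ψ3 y := by
  unfold ψ3; rw [ZMod.val_add, ← pow_mod hom3, pow_add]

lemma ψ2_add (x y : ZMod 2) : ψ2 (x + y) = ψ2 x * ψ2 y := by
  unfold ψ2; rw [ZMod.val_add, ← pow_mod (by norm_num : (-1:ℂ)^2 = 1), pow_add]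

lemma ψ3_zero : ψ3 0 = 1 := by simp [ψ3]
lemma ψ2_zero : ψ2 0 = 1 := by simp [ψ2]

lemma abs_om : ‖om‖ = 1 := by
  have h3 : ‖om‖ ^ 3 = 1 := by rw [← norm_pow, hom3, norm_one]
  nlinarith [norm_nonneg om, sq_nonneg (‖om‖ - 1),
    sq_nonneg (‖om‖ + 1)]

lemma abs_ψ3 (x : ZMod 3) : ‖ψ3 x‖ = 1 := by
  rw [ψ3, norm_pow, abs_om, one_pow]
lemma abs_ψ2 (x : ZMod 2) : ‖ψ2 x‖ = 1 := by
  rw [ψ2, norm_pow, norm_neg, norm_one, one_pow]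

lemma sum_ψ3 : ∑ c : ZMod 3, ψ3 c = 0 := by
  have h : ∑ c : ZMod 3, ψ3 c = ψ3 0 + ψ3 1 + ψ3 2 := by
    show ∑ c : Fin 3, ψ3 c = _
    exact Fin.sum_univ_three (fun c : ZMod 3 => ψ3 c)
  have v1 : ψ3 1 = om := by norm_num [ψ3, ZMod.val_one]
  have v2 : ψ3 2 = om ^ 2 := by
    have : ((2 : ZMod 3)).val = 2 := by decide
    rw [ψ3, this]
  rw [h, ψ3_zero, v1, v2]
  linear_combination hrel

lemma sum_ψ2 : ∑ c : ZMod 2, ψ2 c = 0 := by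
  have h : ∑ c : ZMod 2, ψ2 c = ψ2 0 + ψ2 1 := by
    show ∑ c : Fin 2, ψ2 c = _
    exact Fin.sum_univ_two (fun c : ZMod 2 => ψ2 c)
  have v1 : ψ2 1 = -1 := by norm_num [ψ2, ZMod.val_one]
  rw [h, ψ2_zero, v1]; ring

lemma sum_ψ3_mul {u : ZMod 3} (hu : u ≠ 0) : ∑ c : ZMod 3, ψ3 (u * c) = 0 := by
  haveI : Fact (Nat.Prime 3) := ⟨by norm_num⟩
  rw [Fintype.sum_bijective (fun c => u * c) (mulLeft_bijective₀ u hu)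
    (fun c => ψ3 (u * c)) ψ3 (fun c => rfl)]
  exact sum_ψ3

lemma sum_ψ2_mul {u : ZMod 2} (hu : u ≠ 0) : ∑ c : ZMod 2, ψ2 (u * c) = 0 := by
  haveI : Fact (Nat.Prime 2) := ⟨by norm_num⟩
  rw [Fintype.sum_bijective (fun c => u * c) (mulLeft_bijective₀ u hu)
    (fun c => ψ2 (u * c)) ψ2 (fun c => rfl)]
  exact sum_ψ2


variable {m n : ℕ}

abbrev G (m n : ℕ) := (Fin m → ZMod 3) × (Fin n → ZMod 2)

noncomputable def E (h g : G m n) : ℂ :=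
  ψ3 (∑ i, g.1 i * h.1 i) * ψ2 (∑ j, g.2 j * h.2 j)

lemma ψ3_sum {α : Type*} (s : Finset α) (f : α → ZMod 3) :
    ψ3 (∑ i ∈ s, f i) = ∏ i ∈ s, ψ3 (f i) := by
  induction s using Finset.cons_induction with
  | empty => simp [ψ3_zero]
  | cons a s ha ih => rw [Finset.sum_cons, Finset.prod_cons, ψ3_add, ih]

lemma ψ2_sum {α : Type*} (s : Finset α) (f : α → ZMod 2) :
    ψ2 (∑ i ∈ s, f i) = ∏ i ∈ s, ψ2 (f i) := by
  induction s using Finset.cons_induction with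
  | empty => simp [ψ2_zero]
  | cons a s ha ih => rw [Finset.sum_cons, Finset.prod_cons, ψ2_add, ih]

lemma E_zero_right (h : G m n) : E h 0 = 1 := by
  simp [E, ψ3_zero, ψ2_zero]

lemma E_add_right (h g g' : G m n) : E h (g + g') = E h g * E h g' := by
  unfold E
  have e1 : (∑ i, (g + g').1 i * h.1 i)
      = (∑ i, g.1 i * h.1 i) + ∑ i, g'.1 i * h.1 i := by
    rw [← Finset.sum_add_distrib]
    refine Finset.sum_congr rfl fun i _ => ?_
    show (g.1 i + g'.1 i) * h.1 i = _
    ring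
  have e2 : (∑ j, (g + g').2 j * h.2 j)
      = (∑ j, g.2 j * h.2 j) + ∑ j, g'.2 j * h.2 j := by
    rw [← Finset.sum_add_distrib]
    refine Finset.sum_congr rfl fun j _ => ?_
    show (g.2 j + g'.2 j) * h.2 j = _
    ring
  rw [e1, e2, ψ3_add, ψ2_add]; ring

lemma E_symm (h g : G m n) : E h g = E g h := by
  unfold E
  congr 1
  · congr 1
    exact Finset.sum_congr rfl fun i _ => mul_comm _ _
  · congr 1
    exact Finset.sum_congr rfl fun j _ => mul_comm _ _

lemma E_mul_neg (h g : G m n) : E h g * E h (-g) = 1 := by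
  rw [← E_add_right, add_neg_cancel, E_zero_right]

lemma abs_E (h g : G m n) : ‖E h g‖ = 1 := by
  rw [E, norm_mul, abs_ψ3, abs_ψ2, one_mul]

lemma conj_E (h g : G m n) : (starRingEnd ℂ) (E h g) = E h (-g) := by
  rw [← Complex.inv_eq_conj (abs_E h g)]
  exact inv_eq_of_mul_eq_one_right (E_mul_neg h g)

lemma sum_ψ3_dot (v : Fin m → ZMod 3) :
    ∑ h1 : Fin m → ZMod 3, ψ3 (∑ i, v i * h1 i) = if v = 0 then (3:ℂ)^m else 0 := by
  have key : ∑ h1 : Fin m → ZMod 3, ψ3 (∑ i, v i * h1 i)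
      = ∏ i, ∑ c : ZMod 3, ψ3 (v i * c) := by
    rw [Finset.prod_univ_sum, Fintype.piFinset_univ]
    exact Finset.sum_congr rfl fun h1 _ => ψ3_sum _ _
  rw [key]
  by_cases hv : v = 0
  · subst hv
    rw [if_pos rfl]
    have : ∀ i : Fin m, ∑ c : ZMod 3, ψ3 ((0 : Fin m → ZMod 3) i * c) = 3 := by
      intro i
      simp [ψ3_zero, Finset.card_univ]
    rw [Finset.prod_congr rfl fun i _ => this i, Finset.prod_const, Finset.card_univ,
      Fintype.card_fin]
  · rw [if_neg hv]
    obtain ⟨i, hi⟩ : ∃ i, v i ≠ 0 := by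
      by_contra hc; push_neg at hc; exact hv (funext hc)
    exact Finset.prod_eq_zero (Finset.mem_univ i) (sum_ψ3_mul hi)

lemma sum_ψ2_dot (v : Fin n → ZMod 2) :
    ∑ h2 : Fin n → ZMod 2, ψ2 (∑ j, v j * h2 j) = if v = 0 then (2:ℂ)^n else 0 := by
  have key : ∑ h2 : Fin n → ZMod 2, ψ2 (∑ j, v j * h2 j)
      = ∏ j, ∑ c : ZMod 2, ψ2 (v j * c) := by
    rw [Finset.prod_univ_sum, Fintype.piFinset_univ]
    exact Finset.sum_congr rfl fun h2 _ => ψ2_sum _ _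
  rw [key]
  by_cases hv : v = 0
  · subst hv
    rw [if_pos rfl]
    have : ∀ j : Fin n, ∑ c : ZMod 2, ψ2 ((0 : Fin n → ZMod 2) j * c) = 2 := by
      intro j
      simp [ψ2_zero, Finset.card_univ]
    rw [Finset.prod_congr rfl fun j _ => this j, Finset.prod_const, Finset.card_univ,
      Fintype.card_fin]
  · rw [if_neg hv]
    obtain ⟨j, hj⟩ : ∃ j, v j ≠ 0 := by
      by_contra hc; push_neg at hc; exact hv (funext hc)
    exact Finset.prod_eq_zero (Finset.mem_univ j) (sum_ψ2_mul hj)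

lemma sum_E (g : G m n) :
    ∑ h : G m n, E h g = if g = 0 then ((3:ℂ)^m * 2^n) else 0 := by
  rw [Fintype.sum_prod_type]
  have step : ∑ h1 : Fin m → ZMod 3, ∑ h2 : Fin n → ZMod 2, E (h1, h2) g
      = (∑ h1 : Fin m → ZMod 3, ψ3 (∑ i, g.1 i * h1 i))
        * ∑ h2 : Fin n → ZMod 2, ψ2 (∑ j, g.2 j * h2 j) := by
    rw [Finset.sum_mul_sum]
    rfl
  rw [step, sum_ψ3_dot, sum_ψ2_dot]
  by_cases h1 : g.1 = 0 <;> by_cases h2 : g.2 = 0 <;>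
    simp [h1, h2, Prod.ext_iff]


def Zom (z : ℂ) : Prop := ∃ x y : ℤ, z = x + y * om

lemma Zom_mul {z w : ℂ} (hz : Zom z) (hw : Zom w) : Zom (z * w) := by
  obtain ⟨x, y, rfl⟩ := hz
  obtain ⟨x', y', rfl⟩ := hw
  refine ⟨x * x' - y * y', x * y' + x' * y - y * y', ?_⟩
  push_cast
  linear_combination (y * y' : ℂ) * hrel

lemma Zom_one : Zom 1 := ⟨1, 0, by push_cast; ring⟩
lemma Zom_zero : Zom 0 := ⟨0, 0, by push_cast; ring⟩
lemma Zom_om : Zom om := ⟨0, 1, by push_cast; ring⟩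

lemma Zom_add {z w : ℂ} (hz : Zom z) (hw : Zom w) : Zom (z + w) := by
  obtain ⟨x, y, rfl⟩ := hz
  obtain ⟨x', y', rfl⟩ := hw
  exact ⟨x + x', y + y', by push_cast; ring⟩

lemma Zom_neg {z : ℂ} (hz : Zom z) : Zom (-z) := by
  obtain ⟨x, y, rfl⟩ := hz
  exact ⟨-x, -y, by push_cast; ring⟩

lemma Zom_pow {z : ℂ} (hz : Zom z) (k : ℕ) : Zom (z ^ k) := by
  induction k with
  | zero => simpa using Zom_one
  | succ k ih => rw [pow_succ]; exact Zom_mul ih hz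

lemma Zom_ψ3 (x : ZMod 3) : Zom (ψ3 x) := Zom_pow Zom_om _
lemma Zom_ψ2 (x : ZMod 2) : Zom (ψ2 x) := Zom_pow (Zom_neg Zom_one) _

lemma Zom_E (h g : G m n) : Zom (E h g) := Zom_mul (Zom_ψ3 _) (Zom_ψ2 _)

lemma Zom_sum {α : Type*} (s : Finset α) (f : α → ℂ) (hf : ∀ a ∈ s, Zom (f a)) :
    Zom (∑ a ∈ s, f a) := by
  induction s using Finset.cons_induction with
  | empty => simpa using Zom_zero
  | cons a s ha ih =>
    rw [Finset.sum_cons]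
    exact Zom_add (hf a (Finset.mem_cons_self a s))
      (ih fun b hb => hf b (Finset.mem_cons_of_mem hb))

lemma conj_om : (starRingEnd ℂ) om = -1 - om := by
  have h1 : (starRingEnd ℂ) om = om⁻¹ := (Complex.inv_eq_conj abs_om).symm
  have h2 : om * om ^ 2 = 1 := by rw [← pow_succ']; exact hom3
  rw [h1, inv_eq_of_mul_eq_one_right h2]
  linear_combination hrel

lemma normSq_int {z : ℂ} (hz : Zom z) : ∃ u : ℤ, 0 ≤ u ∧ (Complex.normSq z : ℝ) = u := by
  obtain ⟨x, y, rfl⟩ := hz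
  have key : ((Complex.normSq ((x : ℂ) + y * om) : ℝ) : ℂ) = ((x ^ 2 - x * y + y ^ 2 : ℤ) : ℂ) := by
    rw [← Complex.mul_conj]
    simp only [map_add, map_mul, conj_om, map_intCast]
    push_cast
    linear_combination (-(y : ℂ) ^ 2) * hrel
  have keyR : (Complex.normSq ((x : ℂ) + y * om) : ℝ) = ((x ^ 2 - x * y + y ^ 2 : ℤ) : ℝ) := by
    exact_mod_cast key
  refine ⟨x ^ 2 - x * y + y ^ 2, ?_, keyR⟩
  have := Complex.normSq_nonneg ((x : ℂ) + y * om)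
  rw [keyR] at this
  exact_mod_cast this

lemma normSq_eq_one {z w : ℂ} (hz : Zom z) (hw : Zom w) (h : z * w = -1) :
    Complex.normSq z = 1 := by
  obtain ⟨u, hu0, hu⟩ := normSq_int hz
  obtain ⟨v, hv0, hv⟩ := normSq_int hw
  have hmul : Complex.normSq z * Complex.normSq w = 1 := by
    rw [← map_mul, h]; simp
  have huv : u * v = 1 := by
    have : ((u * v : ℤ) : ℝ) = 1 := by push_cast; rw [← hu, ← hv]; exact hmul
    exact_mod_cast this
  have hu1 : u = 1 := by
    rcases Int.isUnit_iff.mp (IsUnit.of_mul_eq_one v huv) with h1 | h1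
    · exact h1
    · omega
  rw [hu, hu1]; norm_num


end NFaux

open NFaux in
theorem no_near_factorization_Z3m_Z2n (m n : ℕ) :
    ¬ ∃ A B : Finset ((Fin m → ZMod 3) × (Fin n → ZMod 2)),
      IsNontrivialAddNearFactorization A B := by
  classical
  rintro ⟨A, B, hcard, hAB, hA1, hB1⟩
  set N := Fintype.card (G m n) with hNdef
  have hNnat : N = 3 ^ m * 2 ^ n := by
    simp [hNdef, Fintype.card_prod, Fintype.card_fun]
  have hNc : (N : ℂ) = (3:ℂ) ^ m * 2 ^ n := by rw [hNnat]; push_cast; ring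
  have hN1 : 1 ≤ N := Fintype.card_pos
  -- cardinality of A + B
  have hcardAB : (A + B).card = N - 1 := by
    rw [hAB, Finset.card_sdiff_of_subset (Finset.singleton_subset_iff.mpr (Finset.mem_univ 0)),
      Finset.card_univ, Finset.card_singleton]
  -- each element of A + B has exactly one representation
  have hmaps : ∀ p ∈ A ×ˢ B, p.1 + p.2 ∈ A + B := by
    intro p hp
    rw [Finset.mem_product] at hp
    exact Finset.add_mem_add hp.1 hp.2
  have hfibsum : (A ×ˢ B).card
      = ∑ g ∈ A + B, ((A ×ˢ B).filter (fun p => p.1 + p.2 = g)).card :=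
    Finset.card_eq_sum_card_fiberwise hmaps
  have hABcard : (A ×ˢ B).card = (A + B).card := by
    rw [Finset.card_product, hcard, hcardAB]
  have hfib1 : ∀ g ∈ A + B, ((A ×ˢ B).filter (fun p => p.1 + p.2 = g)).card = 1 := by
    intro g hg
    by_contra hne
    have hle : ∀ g' ∈ A + B, 1 ≤ ((A ×ˢ B).filter (fun p => p.1 + p.2 = g')).card := by
      intro g' hg'
      rw [Nat.one_le_iff_ne_zero, ← Nat.pos_iff_ne_zero, Finset.card_pos]
      obtain ⟨a, ha, b, hb, hab⟩ := Finset.mem_add.mp hg'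
      exact ⟨(a, b), Finset.mem_filter.mpr ⟨Finset.mem_product.mpr ⟨ha, hb⟩, hab⟩⟩
    have hlt : ∑ _g' ∈ A + B, 1
        < ∑ g' ∈ A + B, ((A ×ˢ B).filter (fun p => p.1 + p.2 = g')).card :=
      Finset.sum_lt_sum hle ⟨g, hg, lt_of_le_of_ne (hle g hg) (Ne.symm hne)⟩
    rw [Finset.sum_const, smul_eq_mul, mul_one, ← hfibsum, hABcard] at hlt
    exact lt_irrefl _ hlt
  -- character sum products are -1 on nontrivial characters
  have hEprod : ∀ h : G m n, h ≠ 0 →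
      (∑ a ∈ A, E h a) * (∑ b ∈ B, E h b) = -1 := by
    intro h hh
    have e1 : (∑ a ∈ A, E h a) * (∑ b ∈ B, E h b)
        = ∑ p ∈ A ×ˢ B, E h (p.1 + p.2) := by
      rw [Finset.sum_mul_sum, Finset.sum_product]
      exact Finset.sum_congr rfl fun a _ =>
        Finset.sum_congr rfl fun b _ => (E_add_right h a b).symm
    have e2 : ∑ p ∈ A ×ˢ B, E h (p.1 + p.2) = ∑ g ∈ A + B, E h g := by
      rw [← Finset.sum_fiberwise_of_maps_to hmaps (fun p => E h (p.1 + p.2))]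
      refine Finset.sum_congr rfl fun g hg => ?_
      have hcg : ∀ p ∈ (A ×ˢ B).filter (fun p => p.1 + p.2 = g),
          E h (p.1 + p.2) = E h g := by
        intro p hp; rw [(Finset.mem_filter.mp hp).2]
      rw [Finset.sum_congr rfl hcg, Finset.sum_const, hfib1 g hg, one_smul]
    have e3 : ∑ g ∈ A + B, E h g = (∑ g : G m n, E h g) - E h 0 := by
      rw [hAB, Finset.sum_sdiff_eq_sub
        (Finset.singleton_subset_iff.mpr (Finset.mem_univ 0)), Finset.sum_singleton]
    have e4 : ∑ g : G m n, E h g = 0 := by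
      have hsymm : ∑ g : G m n, E h g = ∑ g : G m n, E g h :=
        Finset.sum_congr rfl fun g _ => E_symm h g
      rw [hsymm, sum_E, if_neg hh]
    rw [e1, e2, e3, e4, E_zero_right]; ring
  -- Parseval
  have hconjsum : ∀ h : G m n,
      (starRingEnd ℂ) (∑ a ∈ A, E h a) = ∑ a ∈ A, E h (-a) := by
    intro h; rw [map_sum]; exact Finset.sum_congr rfl fun a _ => conj_E h a
  have hpar : ∑ h : G m n, (∑ a ∈ A, E h a) * (starRingEnd ℂ) (∑ a ∈ A, E h a)
      = (N : ℂ) * A.card := by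
    have e1 : ∀ h : G m n, (∑ a ∈ A, E h a) * (starRingEnd ℂ) (∑ a ∈ A, E h a)
        = ∑ a ∈ A, ∑ a' ∈ A, E h (a + -a') := by
      intro h
      rw [hconjsum, Finset.sum_mul_sum]
      exact Finset.sum_congr rfl fun a _ =>
        Finset.sum_congr rfl fun a' _ => (E_add_right h a (-a')).symm
    calc ∑ h : G m n, (∑ a ∈ A, E h a) * (starRingEnd ℂ) (∑ a ∈ A, E h a)
        = ∑ h : G m n, ∑ a ∈ A, ∑ a' ∈ A, E h (a + -a') :=
          Finset.sum_congr rfl fun h _ => e1 h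
      _ = ∑ a ∈ A, ∑ a' ∈ A, ∑ h : G m n, E h (a + -a') := by
          rw [Finset.sum_comm]
          exact Finset.sum_congr rfl fun a _ => Finset.sum_comm
      _ = ∑ a ∈ A, ∑ a' ∈ A, if a + -a' = 0 then ((3:ℂ) ^ m * 2 ^ n) else 0 :=
          Finset.sum_congr rfl fun a _ => Finset.sum_congr rfl fun a' _ => sum_E _
      _ = ∑ a ∈ A, ((3:ℂ) ^ m * 2 ^ n) := by
          refine Finset.sum_congr rfl fun a ha => ?_
          have hcond : ∀ a' : G m n, (a + -a' = 0) = (a = a') := by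
            intro a'; rw [add_neg_eq_zero]
          simp only [hcond]
          rw [Finset.sum_ite_eq A a (fun _ => (3:ℂ) ^ m * 2 ^ n), if_pos ha]
      _ = (N : ℂ) * A.card := by
          rw [Finset.sum_const, hNc, nsmul_eq_mul]; ring
  -- evaluate the same sum term by term
  have hsplit : ∑ h : G m n, (∑ a ∈ A, E h a) * (starRingEnd ℂ) (∑ a ∈ A, E h a)
      = (A.card : ℂ) ^ 2 + ((N - 1 : ℕ) : ℂ) := by
    rw [← Finset.add_sum_erase _ _ (Finset.mem_univ (0 : G m n))]
    congr 1
    · have hA0 : (∑ a ∈ A, E (0 : G m n) a) = (A.card : ℂ) := by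
        rw [Finset.sum_congr rfl fun a _ =>
          (by rw [E_symm, E_zero_right] : E (0 : G m n) a = 1)]
        simp
      rw [hA0, map_natCast]; ring
    · have hone : ∀ h ∈ Finset.univ.erase (0 : G m n),
          (∑ a ∈ A, E h a) * (starRingEnd ℂ) (∑ a ∈ A, E h a) = 1 := by
        intro h hh
        have hne := Finset.ne_of_mem_erase hh
        have hz : Zom (∑ a ∈ A, E h a) := Zom_sum _ _ fun a _ => Zom_E h a
        have hw : Zom (∑ b ∈ B, E h b) := Zom_sum _ _ fun b _ => Zom_E h b
        have h1 := normSq_eq_one hz hw (hEprod h hne)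
        rw [Complex.mul_conj, h1]; norm_num
      rw [Finset.sum_congr rfl hone, Finset.sum_const,
        Finset.card_erase_of_mem (Finset.mem_univ _), Finset.card_univ]
      rw [nsmul_eq_mul, mul_one, ← hNdef]
  -- final arithmetic
  have hkey : (A.card : ℂ) ^ 2 + ((N - 1 : ℕ) : ℂ) = (N : ℂ) * A.card := by
    rw [← hsplit, hpar]
  have hkeyN : A.card ^ 2 + (N - 1) = N * A.card := by exact_mod_cast hkey
  have hKZ : (A.card : ℤ) ^ 2 + ((N : ℤ) - 1) = (N : ℤ) * A.card := by
    zify [hN1] at hkeyN; exact hkeyN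
  have hklZ : (A.card : ℤ) * B.card = (N : ℤ) - 1 := by
    zify [hN1] at hcard; exact hcard
  have hk2 : (2 : ℤ) ≤ A.card := by exact_mod_cast hA1
  have hl2 : (2 : ℤ) ≤ B.card := by exact_mod_cast hB1
  have hfact : ((A.card : ℤ) - 1) * ((A.card : ℤ) - ((N : ℤ) - 1)) = 0 := by
    linear_combination hKZ
  rcases mul_eq_zero.mp hfact with h | h
  · linarith
  · have hkl : (A.card : ℤ) * B.card = (A.card : ℤ) := by linarith [hklZ]
    nlinarith
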